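/- For every binary tree T of size n and every permutation σ of {1,…,n}: σ is a linear extension of inc(T) if and only if σ belongs to the sylvester class of some binary tree T' of size n with T' ≤ T in the Tamari order; and σ is a linear extension of dec(T) if and only if σ belongs to the sylvester class of some binary tree T' of size n with T' ≥ T in the Tamari order. -/

import Mathlib

/-- Planar binary trees: empty, or a node with a left and a right subtree. -/
inductive BinTree : Type where
  | leaf : BinTree
  | node : BinTree → BinTree → BinTree
  deriving DecidableEq

namespace BinTree

/-- Size: number of internal nodes. -/
def size : BinTree → ℕ
  | leaf => 0
  | node l r => l.size + r.size + 1

/-- `sub T o a b` : in the binary-search-tree labelling of `T` shifted by `o`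
(its labels are `o+1, …, o+T.size`), the node labelled `a` lies in the subtree
rooted at the node labelled `b`, i.e. `a ⊴_T b`. -/
def sub : BinTree → ℕ → ℕ → ℕ → Prop
  | leaf, _, _, _ => False
  | node l r, o, a, b =>
      (b = o + l.size + 1 ∧ o + 1 ≤ a ∧ a ≤ o + l.size + r.size + 1) ∨
      l.sub o a b ∨ r.sub (o + l.size + 1) a b

/-- One right rotation, applied at any position of the tree. -/
inductive Rot : BinTree → BinTree → Prop
  | base (A B C : BinTree) : Rot (node (node A B) C) (node A (node B C))
  | left {l l' : BinTree} (r : BinTree) : Rot l l' → Rot (node l r) (node l' r)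
  | right (l : BinTree) {r r' : BinTree} : Rot r r' → Rot (node l r) (node l r')

end BinTree

/-- Tamari order: reflexive-transitive closure of right rotation. -/
def tamariLE : BinTree → BinTree → Prop := Relation.ReflTransGen BinTree.Rot


namespace BinTree

lemma sub_bounds : ∀ (T : BinTree) (o a b : ℕ), sub T o a b →
    o + 1 ≤ a ∧ a ≤ o + T.size ∧ o + 1 ≤ b ∧ b ≤ o + T.size := by
  intro T
  induction T with
  | leaf => intro o a b h; exact h.elim
  | node l r ihl ihr =>
    intro o a b h
    simp only [size]
    rcases h with ⟨hb, ha1, ha2⟩ | h | h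
    · omega
    · have := ihl o a b h; omega
    · have := ihr (o + l.size + 1) a b h; omega

lemma Rot.size_eq {t1 t2 : BinTree} (h : Rot t1 t2) : t1.size = t2.size := by
  induction h with
  | base A B C => simp only [size]; omega
  | left r h ih => simp only [size, ih]
  | right l h ih => simp only [size, ih]

lemma tamari_size {t1 t2 : BinTree} (h : tamariLE t1 t2) : t1.size = t2.size := by
  induction h with
  | refl => rfl
  | tail _ h ih => rw [ih, h.size_eq]

lemma tamari_congr_left (r : BinTree) {l l' : BinTree} (h : tamariLE l l') :
    tamariLE (node l r) (node l' r) :=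
  Relation.ReflTransGen.lift (fun x => node x r) (fun _ _ hr => Rot.left r hr) _ _ h

lemma tamari_congr_right (l : BinTree) {r r' : BinTree} (h : tamariLE r r') :
    tamariLE (node l r) (node l r') :=
  Relation.ReflTransGen.lift (fun x => node l x) (fun _ _ hr => Rot.right l hr) _ _ h

lemma tamari_congr {l l' r r' : BinTree} (h1 : tamariLE l l') (h2 : tamariLE r r') :
    tamariLE (node l r) (node l' r') :=
  (tamari_congr_left r h1).trans (tamari_congr_right l' h2)

lemma sub_of_rot_inc {t1 t2 : BinTree} (h : Rot t1 t2) :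
    ∀ o a b, a < b → sub t2 o a b → sub t1 o a b := by
  induction h with
  | base A B C =>
    intro o a b hab h
    rcases h with ⟨hb, ha1, ha2⟩ | h | (⟨hb, ha1, ha2⟩ | h | h)
    · exact Or.inr (Or.inl (Or.inl ⟨hb, ha1, by omega⟩))
    · exact Or.inr (Or.inl (Or.inr (Or.inl h)))
    · refine Or.inl ⟨by simp only [size]; omega, by omega, by simp only [size]; omega⟩
    · exact Or.inr (Or.inl (Or.inr (Or.inr h)))
    · refine Or.inr (Or.inr ?_)
      rw [show o + (node A B).size + 1 = o + A.size + 1 + B.size + 1 from by simp only [size]; omega]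
      exact h
  | left r hrot ih =>
    intro o a b hab h
    have hsz := hrot.size_eq
    rcases h with ⟨hb, ha1, ha2⟩ | h | h
    · exact Or.inl ⟨by omega, ha1, by omega⟩
    · exact Or.inr (Or.inl (ih o a b hab h))
    · rw [← hsz] at h; exact Or.inr (Or.inr h)
  | right l hrot ih =>
    intro o a b hab h
    have hsz := hrot.size_eq
    rcases h with ⟨hb, ha1, ha2⟩ | h | h
    · exact Or.inl ⟨hb, ha1, by omega⟩
    · exact Or.inr (Or.inl h)
    · exact Or.inr (Or.inr (ih _ a b hab h))

lemma sub_of_rot_dec {t1 t2 : BinTree} (h : Rot t1 t2) :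
    ∀ o a b, b < a → sub t1 o a b → sub t2 o a b := by
  induction h with
  | base A B C =>
    intro o a b hab h
    rcases h with ⟨hb, ha1, ha2⟩ | (⟨hb, ha1, ha2⟩ | h | h) | h
    · -- b = root y of t1, a > b : a in C
      refine Or.inr (Or.inr (Or.inl ⟨?_, ?_, ?_⟩)) <;> simp only [size] at * <;> omega
    · -- b = x, a > x : a arbitrary in t2 root-range
      refine Or.inl ⟨hb, by omega, by simp only [size] at *; omega⟩
    · exact Or.inr (Or.inl h)
    · exact Or.inr (Or.inr (Or.inr (Or.inl h)))
    · refine Or.inr (Or.inr (Or.inr (Or.inr ?_)))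
      rw [show o + A.size + 1 + B.size + 1 = o + (node A B).size + 1 from by simp only [size]; omega]
      exact h
  | left r hrot ih =>
    intro o a b hab h
    have hsz := hrot.size_eq
    rcases h with ⟨hb, ha1, ha2⟩ | h | h
    · exact Or.inl ⟨by omega, ha1, by omega⟩
    · exact Or.inr (Or.inl (ih o a b hab h))
    · rw [hsz] at h; exact Or.inr (Or.inr h)
  | right l hrot ih =>
    intro o a b hab h
    have hsz := hrot.size_eq
    rcases h with ⟨hb, ha1, ha2⟩ | h | h
    · exact Or.inl ⟨hb, ha1, by omega⟩
    · exact Or.inr (Or.inl h)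
    · exact Or.inr (Or.inr (ih _ a b hab h))

lemma sub_of_tamari_inc {t1 t2 : BinTree} (h : tamariLE t1 t2) :
    ∀ o a b, a < b → sub t2 o a b → sub t1 o a b := by
  induction h with
  | refl => intro o a b _ h; exact h
  | tail _ hr ih => intro o a b hab h; exact ih o a b hab (sub_of_rot_inc hr o a b hab h)

lemma sub_of_tamari_dec {t1 t2 : BinTree} (h : tamariLE t1 t2) :
    ∀ o a b, b < a → sub t1 o a b → sub t2 o a b := by
  induction h with
  | refl => intro o a b _ h; exact h
  | tail _ hr ih => intro o a b hab h; exact sub_of_rot_dec hr o a b hab (ih o a b hab h)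

end BinTree

lemma indexOf_getLast_eq {l : List ℕ} (hne : l ≠ []) (hnd : l.Nodup) :
    l.idxOf (l.getLast hne) = l.length - 1 := by
  have hdrop := List.dropLast_append_getLast hne
  set m := l.getLast hne with hm
  have hnotmem : m ∉ l.dropLast := by
    intro hmem
    have := hdrop ▸ hnd
    rw [List.nodup_append] at this
    exact this.2.2 m hmem m (by simp) rfl
  conv_lhs => rw [← hdrop]
  rw [List.idxOf_append_of_notMem hnotmem]
  simp [List.length_dropLast]

lemma indexOf_lt_getLast {l : List ℕ} (hne : l ≠ []) (hnd : l.Nodup) {a : ℕ}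
    (ha : a ∈ l) (hne2 : a ≠ l.getLast hne) : l.idxOf a < l.idxOf (l.getLast hne) := by
  have h1 := indexOf_getLast_eq hne hnd
  have h2 : l.idxOf a < l.length := List.idxOf_lt_length_iff.mpr ha
  have h3 : l.idxOf a ≠ l.idxOf (l.getLast hne) := by
    intro h
    exact hne2 ((List.idxOf_inj ha).mp h)
  omega

lemma indexOf_filter_mono (p : ℕ → Bool) : ∀ (l : List ℕ), l.Nodup → ∀ a b,
    a ∈ l.filter p → b ∈ l.filter p → l.idxOf a < l.idxOf b →
    (l.filter p).idxOf a < (l.filter p).idxOf b := by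
  intro l
  induction l with
  | nil => simp
  | cons x t ih =>
    intro hnd a b ha hb hlt
    rw [List.nodup_cons] at hnd
    by_cases hax : a = x
    · subst hax
      have hpa : p a = true := (List.mem_filter.mp ha).2
      have hbx : b ≠ a := by
        intro h; subst h; omega
      have hbt : b ∈ t.filter p := by
        have := List.mem_filter.mp hb
        exact List.mem_filter.mpr ⟨by rcases List.mem_cons.mp this.1 with h | h; exact absurd h hbx; exact h, this.2⟩
      rw [List.filter_cons_of_pos hpa]
      rw [List.idxOf_cons_self]
      have : b ≠ a := hbx
      rw [List.idxOf_cons_ne _ (by simpa using (Ne.symm this))]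
      omega
    · by_cases hbx : b = x
      · subst hbx
        rw [List.idxOf_cons_self, List.idxOf_cons_ne _ (by simpa using (Ne.symm hax))] at hlt
        omega
      · have hat : a ∈ t.filter p := by
          have := List.mem_filter.mp ha
          exact List.mem_filter.mpr ⟨by rcases List.mem_cons.mp this.1 with h | h; exact absurd h hax; exact h, this.2⟩
        have hbt : b ∈ t.filter p := by
          have := List.mem_filter.mp hb
          exact List.mem_filter.mpr ⟨by rcases List.mem_cons.mp this.1 with h | h; exact absurd h hbx; exact h, this.2⟩
        rw [List.idxOf_cons_ne _ (by simpa using (Ne.symm hax)),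
          List.idxOf_cons_ne _ (by simpa using (Ne.symm hbx))] at hlt
        have hres := ih hnd.2 a b hat hbt (by omega)
        by_cases hpx : p x = true
        · rw [List.filter_cons_of_pos hpx,
            List.idxOf_cons_ne _ (by simpa using (Ne.symm hax)),
            List.idxOf_cons_ne _ (by simpa using (Ne.symm hbx))]
          omega
        · rw [List.filter_cons_of_neg (by simpa using hpx)]
          exact hres

lemma indexOf_filter_lt_iff (p : ℕ → Bool) (l : List ℕ) (hnd : l.Nodup) (a b : ℕ)
    (ha : a ∈ l.filter p) (hb : b ∈ l.filter p) (hab : a ≠ b) :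
    (l.filter p).idxOf a < (l.filter p).idxOf b ↔ l.idxOf a < l.idxOf b := by
  have hal : a ∈ l := (List.mem_filter.mp ha).1
  have hbl : b ∈ l := (List.mem_filter.mp hb).1
  constructor
  · intro h
    by_contra hcon
    push_neg at hcon
    have hne : l.idxOf a ≠ l.idxOf b := fun he => hab ((List.idxOf_inj hal).mp he)
    have : l.idxOf b < l.idxOf a := by omega
    have := indexOf_filter_mono p l hnd b a hb ha this
    omega
  · exact indexOf_filter_mono p l hnd a b ha hb
namespace BinTree

def cutL : BinTree → ℕ → ℕ → BinTree
  | leaf, _, _ => leaf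
  | node l r, o, m => if m = o + l.size + 1 then l else node l (cutL r (o + l.size + 1) m)

def cutH : BinTree → ℕ → ℕ → BinTree
  | leaf, _, _ => leaf
  | node l r, o, m => if m = o + l.size + 1 then r else cutH r (o + l.size + 1) m

def cutA : BinTree → ℕ → ℕ → BinTree
  | leaf, _, _ => leaf
  | node l _, o, m => if m = o + l.size + 1 then l else cutA l o m

def cutB : BinTree → ℕ → ℕ → BinTree
  | leaf, _, _ => leaf
  | node l r, o, m => if m = o + l.size + 1 then r else node (cutB l o m) r

lemma spineR_step {l r : BinTree} {o m : ℕ} (hm1 : o + 1 ≤ m)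
    (hm2 : m ≤ o + (l.size + r.size + 1))
    (hmax : ∀ c, m < c → sub (node l r) o m c → False) : o + l.size + 1 ≤ m := by
  by_contra hcon
  push_neg at hcon
  exact hmax (o + l.size + 1) (by omega) (Or.inl ⟨rfl, hm1, by omega⟩)

lemma spineL_step {l r : BinTree} {o m : ℕ} (hm1 : o + 1 ≤ m)
    (hm2 : m ≤ o + (l.size + r.size + 1))
    (hmin : ∀ c, c < m → sub (node l r) o m c → False) : m ≤ o + l.size + 1 := by
  by_contra hcon
  push_neg at hcon
  exact hmin (o + l.size + 1) (by omega) (Or.inl ⟨rfl, hm1, by omega⟩)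

lemma cut_size : ∀ (T : BinTree) (o m : ℕ), o + 1 ≤ m → m ≤ o + T.size →
    (∀ c, m < c → sub T o m c → False) →
    (cutL T o m).size = m - o - 1 ∧ (cutH T o m).size = o + T.size - m := by
  intro T
  induction T with
  | leaf => intro o m h1 h2 _; simp only [size] at h2; omega
  | node l r ihl ihr =>
    intro o m h1 h2 hmax
    simp only [size] at h2
    have hro := spineR_step h1 h2 hmax
    by_cases hm : m = o + l.size + 1
    · simp only [cutL, cutH, if_pos hm, size]; omega
    · have hrec := ihr (o + l.size + 1) m (by omega) (by omega)
        (fun c hc hs => hmax c hc (Or.inr (Or.inr hs)))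
      simp only [cutL, cutH, if_neg hm, size]
      omega

lemma cut_tamari : ∀ (T : BinTree) (o m : ℕ), o + 1 ≤ m → m ≤ o + T.size →
    (∀ c, m < c → sub T o m c → False) →
    tamariLE (node (cutL T o m) (cutH T o m)) T := by
  intro T
  induction T with
  | leaf => intro o m h1 h2 _; simp only [size] at h2; exact absurd h2 (by omega)
  | node l r ihl ihr =>
    intro o m h1 h2 hmax
    simp only [size] at h2
    have hro := spineR_step h1 h2 hmax
    by_cases hm : m = o + l.size + 1
    · simp only [cutL, cutH, if_pos hm]
      exact Relation.ReflTransGen.refl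
    · have hrec := ihr (o + l.size + 1) m (by omega) (by omega)
        (fun c hc hs => hmax c hc (Or.inr (Or.inr hs)))
      simp only [cutL, cutH, if_neg hm]
      exact Relation.ReflTransGen.head (Rot.base l _ _) (tamari_congr_right l hrec)

lemma cutL_sub : ∀ (T : BinTree) (o m : ℕ), o + 1 ≤ m → m ≤ o + T.size →
    (∀ c, m < c → sub T o m c → False) →
    ∀ a b, a < m → b < m → (sub T o a b ↔ sub (cutL T o m) o a b) := by
  intro T
  induction T with
  | leaf => intro o m h1 h2 _; simp only [size] at h2; exact absurd h2 (by omega)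
  | node l r ihl ihr =>
    intro o m h1 h2 hmax a b ha hb
    simp only [size] at h2
    have hro := spineR_step h1 h2 hmax
    by_cases hm : m = o + l.size + 1
    · simp only [cutL, if_pos hm]
      constructor
      · rintro (⟨hb', _, _⟩ | h | h)
        · omega
        · exact h
        · have := sub_bounds r _ a b h; omega
      · intro h; exact Or.inr (Or.inl h)
    · have hmax' : ∀ c, m < c → sub r (o + l.size + 1) m c → False :=
        fun c hc hs => hmax c hc (Or.inr (Or.inr hs))
      have hrec := ihr (o + l.size + 1) m (by omega) (by omega) hmax' a b ha hb
      have hsz := (cut_size r (o + l.size + 1) m (by omega) (by omega) hmax').1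
      simp only [cutL, if_neg hm]
      constructor
      · rintro (⟨hb', h1', h2'⟩ | h | h)
        · exact Or.inl ⟨hb', h1', by omega⟩
        · exact Or.inr (Or.inl h)
        · exact Or.inr (Or.inr (hrec.mp h))
      · rintro (⟨hb', h1', h2'⟩ | h | h)
        · exact Or.inl ⟨hb', h1', by omega⟩
        · exact Or.inr (Or.inl h)
        · exact Or.inr (Or.inr (hrec.mpr h))

lemma cutH_sub : ∀ (T : BinTree) (o m : ℕ), o + 1 ≤ m → m ≤ o + T.size →
    (∀ c, m < c → sub T o m c → False) →
    ∀ a b, m < a → m < b → (sub T o a b ↔ sub (cutH T o m) m a b) := by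
  intro T
  induction T with
  | leaf => intro o m h1 h2 _; simp only [size] at h2; exact absurd h2 (by omega)
  | node l r ihl ihr =>
    intro o m h1 h2 hmax a b ha hb
    simp only [size] at h2
    have hro := spineR_step h1 h2 hmax
    by_cases hm : m = o + l.size + 1
    · simp only [cutH, if_pos hm]
      constructor
      · rintro (⟨hb', _, _⟩ | h | h)
        · omega
        · have := sub_bounds l _ a b h; omega
        · rw [hm]; exact h
      · intro h; rw [hm] at h; exact Or.inr (Or.inr h)
    · have hmax' : ∀ c, m < c → sub r (o + l.size + 1) m c → False :=
        fun c hc hs => hmax c hc (Or.inr (Or.inr hs))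
      have hrec := ihr (o + l.size + 1) m (by omega) (by omega) hmax' a b ha hb
      simp only [cutH, if_neg hm]
      constructor
      · rintro (⟨hb', _, _⟩ | h | h)
        · omega
        · have := sub_bounds l _ a b h; omega
        · exact hrec.mp h
      · intro h; exact Or.inr (Or.inr (hrec.mpr h))

lemma cutAB_size : ∀ (T : BinTree) (o m : ℕ), o + 1 ≤ m → m ≤ o + T.size →
    (∀ c, c < m → sub T o m c → False) →
    (cutA T o m).size = m - o - 1 ∧ (cutB T o m).size = o + T.size - m := by
  intro T
  induction T with
  | leaf => intro o m h1 h2 _; simp only [size] at h2; omega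
  | node l r ihl ihr =>
    intro o m h1 h2 hmin
    simp only [size] at h2
    have hro := spineL_step h1 h2 hmin
    by_cases hm : m = o + l.size + 1
    · simp only [cutA, cutB, if_pos hm, size]; omega
    · have hrec := ihl o m (by omega) (by omega)
        (fun c hc hs => hmin c hc (Or.inr (Or.inl hs)))
      simp only [cutA, cutB, if_neg hm, size]
      omega

lemma cutAB_tamari : ∀ (T : BinTree) (o m : ℕ), o + 1 ≤ m → m ≤ o + T.size →
    (∀ c, c < m → sub T o m c → False) →
    tamariLE T (node (cutA T o m) (cutB T o m)) := by
  intro T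
  induction T with
  | leaf => intro o m h1 h2 _; simp only [size] at h2; exact absurd h2 (by omega)
  | node l r ihl ihr =>
    intro o m h1 h2 hmin
    simp only [size] at h2
    have hro := spineL_step h1 h2 hmin
    by_cases hm : m = o + l.size + 1
    · simp only [cutA, cutB, if_pos hm]
      exact Relation.ReflTransGen.refl
    · have hrec := ihl o m (by omega) (by omega)
        (fun c hc hs => hmin c hc (Or.inr (Or.inl hs)))
      simp only [cutA, cutB, if_neg hm]
      exact Relation.ReflTransGen.tail (tamari_congr_left r hrec) (Rot.base _ _ _)

lemma cutA_sub : ∀ (T : BinTree) (o m : ℕ), o + 1 ≤ m → m ≤ o + T.size →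
    (∀ c, c < m → sub T o m c → False) →
    ∀ a b, a < m → b < m → (sub T o a b ↔ sub (cutA T o m) o a b) := by
  intro T
  induction T with
  | leaf => intro o m h1 h2 _; simp only [size] at h2; exact absurd h2 (by omega)
  | node l r ihl ihr =>
    intro o m h1 h2 hmin a b ha hb
    simp only [size] at h2
    have hro := spineL_step h1 h2 hmin
    by_cases hm : m = o + l.size + 1
    · simp only [cutA, if_pos hm]
      constructor
      · rintro (⟨hb', _, _⟩ | h | h)
        · omega
        · exact h
        · have := sub_bounds r _ a b h; omega
      · intro h; exact Or.inr (Or.inl h)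
    · have hmin' : ∀ c, c < m → sub l o m c → False :=
        fun c hc hs => hmin c hc (Or.inr (Or.inl hs))
      have hrec := ihl o m (by omega) (by omega) hmin' a b ha hb
      simp only [cutA, if_neg hm]
      constructor
      · rintro (⟨hb', _, _⟩ | h | h)
        · omega
        · exact hrec.mp h
        · have := sub_bounds r _ a b h; omega
      · intro h; exact Or.inr (Or.inl (hrec.mpr h))

lemma cutB_sub : ∀ (T : BinTree) (o m : ℕ), o + 1 ≤ m → m ≤ o + T.size →
    (∀ c, c < m → sub T o m c → False) →
    ∀ a b, m < a → m < b → (sub T o a b ↔ sub (cutB T o m) m a b) := by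
  intro T
  induction T with
  | leaf => intro o m h1 h2 _; simp only [size] at h2; exact absurd h2 (by omega)
  | node l r ihl ihr =>
    intro o m h1 h2 hmin a b ha hb
    simp only [size] at h2
    have hro := spineL_step h1 h2 hmin
    by_cases hm : m = o + l.size + 1
    · simp only [cutB, if_pos hm]
      constructor
      · rintro (⟨hb', _, _⟩ | h | h)
        · omega
        · have := sub_bounds l _ a b h; omega
        · rw [hm]; exact h
      · intro h; rw [hm] at h; exact Or.inr (Or.inr h)
    · have hmin' : ∀ c, c < m → sub l o m c → False :=
        fun c hc hs => hmin c hc (Or.inr (Or.inl hs))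
      have hrec := ihl o m (by omega) (by omega) hmin' a b ha hb
      have hsz := (cutAB_size l o m (by omega) (by omega) hmin').2
      simp only [cutB, if_neg hm]
      constructor
      · rintro (⟨hb', h1', h2'⟩ | h | h)
        · exact Or.inl ⟨by omega, by omega, by omega⟩
        · exact Or.inr (Or.inl (hrec.mp h))
        · refine Or.inr (Or.inr ?_)
          rw [show m + (cutB l o m).size + 1 = o + l.size + 1 from by omega]
          exact h
      · rintro (⟨hb', h1', h2'⟩ | h | h)
        · exact Or.inl ⟨by omega, by omega, by omega⟩
        · exact Or.inr (Or.inl (hrec.mpr h))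
        · refine Or.inr (Or.inr ?_)
          rw [show m + (cutB l o m).size + 1 = o + l.size + 1 from by omega] at h
          exact h

end BinTree
def LE' (o n : ℕ) (r : ℕ → ℕ → Prop) (σ : List ℕ) : Prop :=
  σ.Nodup ∧ (∀ x, x ∈ σ ↔ o + 1 ≤ x ∧ x ≤ o + n) ∧
    ∀ a b, r a b → a ≠ b → σ.idxOf a < σ.idxOf b

namespace BinTree

lemma size_eq_zero {T : BinTree} (h : T.size = 0) : T = BinTree.leaf := by
  cases T with
  | leaf => rfl
  | node l r => simp [BinTree.size] at h

lemma fwd_inc : ∀ n : ℕ, ∀ (T : BinTree) (o : ℕ) (σ : List ℕ), T.size = n →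
    LE' o n (fun a b => a < b ∧ T.sub o a b) σ →
    ∃ T' : BinTree, T'.size = n ∧ tamariLE T' T ∧ LE' o n (fun a b => T'.sub o a b) σ := by
  intro n
  induction n using Nat.strong_induction_on with
  | _ n ih =>
    intro T o σ hs h
    obtain ⟨hnd, hmem, hord⟩ := h
    rcases Nat.eq_zero_or_pos n with hn | hn
    · subst hn
      refine ⟨BinTree.leaf, rfl, ?_, hnd, hmem, fun a b hr _ => False.elim hr⟩
      rw [size_eq_zero hs]
      exact Relation.ReflTransGen.refl
    · have hmemo : o + 1 ∈ σ := (hmem _).mpr ⟨le_refl _, by omega⟩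
      have hne : σ ≠ [] := List.ne_nil_of_mem hmemo
      set m := σ.getLast hne with hmdef
      have hmm : m ∈ σ := List.getLast_mem hne
      have hmb := (hmem m).mp hmm
      have hmax : ∀ c, m < c → T.sub o m c → False := by
        intro c hc hsub
        have hcb := sub_bounds T o m c hsub
        have hcm : c ∈ σ := (hmem c).mpr ⟨hcb.2.2.1, by omega⟩
        have h1 := hord m c ⟨hc, hsub⟩ (by omega)
        have h2 := indexOf_lt_getLast hne hnd hcm (by rw [← hmdef]; omega)
        rw [← hmdef] at h2
        omega
      have hm1 : o + 1 ≤ m := hmb.1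
      have hm2 : m ≤ o + T.size := by omega
      have hszL := (cut_size T o m hm1 hm2 hmax).1
      have hszH := (cut_size T o m hm1 hm2 hmax).2
      have hsubL := cutL_sub T o m hm1 hm2 hmax
      have hsubH := cutH_sub T o m hm1 hm2 hmax
      -- the low part
      have hmemL : ∀ x, x ∈ σ.filter (fun x => decide (x < m)) ↔
          o + 1 ≤ x ∧ x ≤ o + (m - o - 1) := by
        intro x
        rw [List.mem_filter, hmem x]
        simp only [decide_eq_true_eq]
        omega
      have hLEl : LE' o (m - o - 1) (fun a b => a < b ∧ (cutL T o m).sub o a b)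
          (σ.filter (fun x => decide (x < m))) := by
        refine ⟨hnd.filter _, hmemL, ?_⟩
        rintro a b ⟨hab, hsub⟩ hneq
        have hbb := sub_bounds _ o a b hsub
        rw [hszL] at hbb
        have hsubT := (hsubL a b (by omega) (by omega)).mpr hsub
        have hσord := hord a b ⟨hab, hsubT⟩ hneq
        exact indexOf_filter_mono _ σ hnd a b ((hmemL a).mpr ⟨by omega, by omega⟩)
          ((hmemL b).mpr ⟨by omega, by omega⟩) hσord
      obtain ⟨Tl', hTl's, hTl'le, hTl'LE⟩ :=
        ih (m - o - 1) (by omega) (cutL T o m) o _ hszL hLEl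
      -- the high part
      have hmemH : ∀ x, x ∈ σ.filter (fun x => decide (m < x)) ↔
          m + 1 ≤ x ∧ x ≤ m + (o + n - m) := by
        intro x
        rw [List.mem_filter, hmem x]
        simp only [decide_eq_true_eq]
        omega
      have hLEh : LE' m (o + n - m) (fun a b => a < b ∧ (cutH T o m).sub m a b)
          (σ.filter (fun x => decide (m < x))) := by
        refine ⟨hnd.filter _, hmemH, ?_⟩
        rintro a b ⟨hab, hsub⟩ hneq
        have hbb := sub_bounds _ m a b hsub
        rw [hszH] at hbb
        have hsubT := (hsubH a b (by omega) (by omega)).mpr hsub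
        have hσord := hord a b ⟨hab, hsubT⟩ hneq
        exact indexOf_filter_mono _ σ hnd a b ((hmemH a).mpr ⟨by omega, by omega⟩)
          ((hmemH b).mpr ⟨by omega, by omega⟩) hσord
      obtain ⟨Th', hTh's, hTh'le, hTh'LE⟩ :=
        ih (o + n - m) (by omega) (cutH T o m) m _ (by omega) hLEh
      refine ⟨node Tl' Th', by simp only [size]; omega,
        (tamari_congr hTl'le hTh'le).trans (cut_tamari T o m hm1 hm2 hmax), hnd, hmem, ?_⟩
      intro a b hsub hneq
      rcases hsub with ⟨hb', h1', h2'⟩ | hsub | hsub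
      · have hbm : b = m := by omega
        have haσ : a ∈ σ := (hmem a).mpr ⟨h1', by omega⟩
        rw [hbm, hmdef]
        exact indexOf_lt_getLast hne hnd haσ (by rw [← hmdef]; omega)
      · have hbb := sub_bounds Tl' o a b hsub
        rw [hTl's] at hbb
        have hordl := hTl'LE.2.2 a b hsub hneq
        exact (indexOf_filter_lt_iff _ σ hnd a b ((hmemL a).mpr ⟨by omega, by omega⟩)
          ((hmemL b).mpr ⟨by omega, by omega⟩) hneq).mp hordl
      · rw [show o + Tl'.size + 1 = m from by omega] at hsub
        have hbb := sub_bounds Th' m a b hsub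
        rw [hTh's] at hbb
        have hordh := hTh'LE.2.2 a b hsub hneq
        exact (indexOf_filter_lt_iff _ σ hnd a b ((hmemH a).mpr ⟨by omega, by omega⟩)
          ((hmemH b).mpr ⟨by omega, by omega⟩) hneq).mp hordh

lemma fwd_dec : ∀ n : ℕ, ∀ (T : BinTree) (o : ℕ) (σ : List ℕ), T.size = n →
    LE' o n (fun a b => b < a ∧ T.sub o a b) σ →
    ∃ T' : BinTree, T'.size = n ∧ tamariLE T T' ∧ LE' o n (fun a b => T'.sub o a b) σ := by
  intro n
  induction n using Nat.strong_induction_on with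
  | _ n ih =>
    intro T o σ hs h
    obtain ⟨hnd, hmem, hord⟩ := h
    rcases Nat.eq_zero_or_pos n with hn | hn
    · subst hn
      refine ⟨BinTree.leaf, rfl, ?_, hnd, hmem, fun a b hr _ => False.elim hr⟩
      rw [size_eq_zero hs]
      exact Relation.ReflTransGen.refl
    · have hmemo : o + 1 ∈ σ := (hmem _).mpr ⟨le_refl _, by omega⟩
      have hne : σ ≠ [] := List.ne_nil_of_mem hmemo
      set m := σ.getLast hne with hmdef
      have hmm : m ∈ σ := List.getLast_mem hne
      have hmb := (hmem m).mp hmm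
      have hmin : ∀ c, c < m → T.sub o m c → False := by
        intro c hc hsub
        have hcb := sub_bounds T o m c hsub
        have hcm : c ∈ σ := (hmem c).mpr ⟨hcb.2.2.1, by omega⟩
        have h1 := hord m c ⟨hc, hsub⟩ (by omega)
        have h2 := indexOf_lt_getLast hne hnd hcm (by rw [← hmdef]; omega)
        rw [← hmdef] at h2
        omega
      have hm1 : o + 1 ≤ m := hmb.1
      have hm2 : m ≤ o + T.size := by omega
      have hszL := (cutAB_size T o m hm1 hm2 hmin).1
      have hszH := (cutAB_size T o m hm1 hm2 hmin).2
      have hsubL := cutA_sub T o m hm1 hm2 hmin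
      have hsubH := cutB_sub T o m hm1 hm2 hmin
      -- the low part
      have hmemL : ∀ x, x ∈ σ.filter (fun x => decide (x < m)) ↔
          o + 1 ≤ x ∧ x ≤ o + (m - o - 1) := by
        intro x
        rw [List.mem_filter, hmem x]
        simp only [decide_eq_true_eq]
        omega
      have hLEl : LE' o (m - o - 1) (fun a b => b < a ∧ (cutA T o m).sub o a b)
          (σ.filter (fun x => decide (x < m))) := by
        refine ⟨hnd.filter _, hmemL, ?_⟩
        rintro a b ⟨hab, hsub⟩ hneq
        have hbb := sub_bounds _ o a b hsub
        rw [hszL] at hbb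
        have hsubT := (hsubL a b (by omega) (by omega)).mpr hsub
        have hσord := hord a b ⟨hab, hsubT⟩ hneq
        exact indexOf_filter_mono _ σ hnd a b ((hmemL a).mpr ⟨by omega, by omega⟩)
          ((hmemL b).mpr ⟨by omega, by omega⟩) hσord
      obtain ⟨Tl', hTl's, hTl'le, hTl'LE⟩ :=
        ih (m - o - 1) (by omega) (cutA T o m) o _ hszL hLEl
      -- the high part
      have hmemH : ∀ x, x ∈ σ.filter (fun x => decide (m < x)) ↔
          m + 1 ≤ x ∧ x ≤ m + (o + n - m) := by
        intro x
        rw [List.mem_filter, hmem x]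
        simp only [decide_eq_true_eq]
        omega
      have hLEh : LE' m (o + n - m) (fun a b => b < a ∧ (cutB T o m).sub m a b)
          (σ.filter (fun x => decide (m < x))) := by
        refine ⟨hnd.filter _, hmemH, ?_⟩
        rintro a b ⟨hab, hsub⟩ hneq
        have hbb := sub_bounds _ m a b hsub
        rw [hszH] at hbb
        have hsubT := (hsubH a b (by omega) (by omega)).mpr hsub
        have hσord := hord a b ⟨hab, hsubT⟩ hneq
        exact indexOf_filter_mono _ σ hnd a b ((hmemH a).mpr ⟨by omega, by omega⟩)
          ((hmemH b).mpr ⟨by omega, by omega⟩) hσord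
      obtain ⟨Th', hTh's, hTh'le, hTh'LE⟩ :=
        ih (o + n - m) (by omega) (cutB T o m) m _ (by omega) hLEh
      refine ⟨node Tl' Th', by simp only [size]; omega,
        (cutAB_tamari T o m hm1 hm2 hmin).trans (tamari_congr hTl'le hTh'le), hnd, hmem, ?_⟩
      intro a b hsub hneq
      rcases hsub with ⟨hb', h1', h2'⟩ | hsub | hsub
      · have hbm : b = m := by omega
        have haσ : a ∈ σ := (hmem a).mpr ⟨h1', by omega⟩
        rw [hbm, hmdef]
        exact indexOf_lt_getLast hne hnd haσ (by rw [← hmdef]; omega)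
      · have hbb := sub_bounds Tl' o a b hsub
        rw [hTl's] at hbb
        have hordl := hTl'LE.2.2 a b hsub hneq
        exact (indexOf_filter_lt_iff _ σ hnd a b ((hmemL a).mpr ⟨by omega, by omega⟩)
          ((hmemL b).mpr ⟨by omega, by omega⟩) hneq).mp hordl
      · rw [show o + Tl'.size + 1 = m from by omega] at hsub
        have hbb := sub_bounds Th' m a b hsub
        rw [hTh's] at hbb
        have hordh := hTh'LE.2.2 a b hsub hneq
        exact (indexOf_filter_lt_iff _ σ hnd a b ((hmemH a).mpr ⟨by omega, by omega⟩)
          ((hmemH b).mpr ⟨by omega, by omega⟩) hneq).mp hordh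

end BinTree

/-- `incRel T a c` : `a` is below `c` in the initial forest `inc T`. -/
def incRel (T : BinTree) (a c : ℕ) : Prop := a < c ∧ T.sub 0 a c

/-- `decRel T c a` : `c` is below `a` in the final forest `dec T`. -/
def decRel (T : BinTree) (c a : ℕ) : Prop := a < c ∧ T.sub 0 c a

/-- `IsLinExt n r l` : the list `l` is a linear extension of the (strict or
reflexive) relation `r` ("`x` below `y`") on `{1, …, n}` : it lists `1, …, n`
once each, and `a` appears before `b` whenever `a` is below `b` with `a ≠ b`. -/
def IsLinExt (n : ℕ) (r : ℕ → ℕ → Prop) (l : List ℕ) : Prop :=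
  l.Nodup ∧ (∀ x, x ∈ l ↔ 1 ≤ x ∧ x ≤ n) ∧
    ∀ a b, r a b → a ≠ b → l.idxOf a < l.idxOf b

lemma isLinExt_iff (n : ℕ) (r : ℕ → ℕ → Prop) (σ : List ℕ) :
    IsLinExt n r σ ↔ LE' 0 n r σ := by
  unfold IsLinExt LE'
  constructor <;>
    (rintro ⟨h1, h2, h3⟩; exact ⟨h1, fun x => by rw [h2 x]; omega, h3⟩)

/-- Linear extensions of `inc T` are exactly the members of sylvester classes
of trees `T' ≤ T` in the Tamari order; linear extensions of `dec T` are exactly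
the members of sylvester classes of trees `T' ≥ T`. -/
theorem stmt1 (n : ℕ) (T : BinTree) (hT : T.size = n) (σ : List ℕ) :
    (IsLinExt n (incRel T) σ ↔
      ∃ T' : BinTree, T'.size = n ∧ tamariLE T' T ∧
        IsLinExt n (fun a b => T'.sub 0 a b) σ) ∧
    (IsLinExt n (decRel T) σ ↔
      ∃ T' : BinTree, T'.size = n ∧ tamariLE T T' ∧
        IsLinExt n (fun a b => T'.sub 0 a b) σ) := by
  constructor
  · constructor
    · intro h
      have h' : LE' 0 n (fun a b => a < b ∧ T.sub 0 a b) σ := (isLinExt_iff n _ σ).mp h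
      obtain ⟨T', h1, h2, h3⟩ := BinTree.fwd_inc n T 0 σ hT h'
      exact ⟨T', h1, h2, (isLinExt_iff n _ σ).mpr h3⟩
    · rintro ⟨T', h1, h2, h3⟩
      obtain ⟨hnd, hmem, hord⟩ := h3
      exact ⟨hnd, hmem, fun a b hr hneq =>
        hord a b (BinTree.sub_of_tamari_inc h2 0 a b hr.1 hr.2) hneq⟩
  · constructor
    · intro h
      have h' : LE' 0 n (fun a b => b < a ∧ T.sub 0 a b) σ := (isLinExt_iff n _ σ).mp h
      obtain ⟨T', h1, h2, h3⟩ := BinTree.fwd_dec n T 0 σ hT h'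
      exact ⟨T', h1, h2, (isLinExt_iff n _ σ).mpr h3⟩
    · rintro ⟨T', h1, h2, h3⟩
      obtain ⟨hnd, hmem, hord⟩ := h3
      exact ⟨hnd, hmem, fun a b hr hneq =>
        hord a b (BinTree.sub_of_tamari_dec h2 0 a b hr.1 hr.2) hneq⟩
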